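/- arXiv:1608.07317 — 2 statements merged into one kernel-verified Lean document; each statement's English description precedes it below -/
import Mathlib

section
/- (Cancellation Lemma) Let α, n be positive integers, b a unit modulo n, and k a nonzero integer. Define W' = {w ∈ (ℤ/nℤ)* : w^α ≡ b (mod n)} and S' = Σ_{w ∈ W'} e(kw/n). Then |S'| ≤ |k|·√n + σ(|k|); in particular |S'| = O_k(√n) as n → ∞. -/
open Finset ArithmeticFunction

noncomputable def e (x : ℝ) : ℂ := Complex.exp (2 * Real.pi * Complex.I * x)

namespace CancelAux

lemma e_add (s t : ℝ) : e (s + t) = e s * e t := by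
  unfold e
  rw [← Complex.exp_add]
  congr 1
  push_cast
  ring

lemma e_int (m : ℤ) : e m = 1 := by
  unfold e
  rw [show (2 * (Real.pi:ℂ) * Complex.I * ((m:ℝ):ℂ)) = (m:ℤ) * (2 * (Real.pi:ℂ) * Complex.I) by
    push_cast; ring]
  exact Complex.exp_int_mul_two_pi_mul_I m

lemma e_add_int (t : ℝ) (m : ℤ) : e (t + m) = e t := by
  rw [e_add, e_int, mul_one]

lemma conj_e (t : ℝ) : (starRingEnd ℂ) (e t) = e (-t) := by
  unfold e
  rw [← Complex.exp_conj]
  congr 1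
  simp only [map_mul, map_ofNat, Complex.conj_I, Complex.conj_ofReal]
  push_cast
  ring

variable {n : ℕ} [NeZero n]

noncomputable def ε (x : ZMod n) : ℂ := e ((x.val : ℝ) / n)

lemma e_div_congr {a b : ℤ} (h : (n:ℤ) ∣ (a - b)) : e ((a:ℝ)/n) = e ((b:ℝ)/n) := by
  obtain ⟨t, ht⟩ := h
  have hn : (n:ℝ) ≠ 0 := Nat.cast_ne_zero.mpr (NeZero.ne n)
  have ha : (a:ℝ) = b + n * t := by
    have := congrArg (Int.cast : ℤ → ℝ) ht
    push_cast at this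
    linarith
  have h2 : (a:ℝ)/n = (b:ℝ)/n + (t:ℤ) := by
    rw [ha]
    field_simp
  rw [h2, e_add_int]

lemma cast_val_eq (a : ZMod n) : (((a.val : ℤ)) : ZMod n) = a := by
  push_cast
  simp [ZMod.natCast_val, ZMod.cast_id]

lemma eps_intCast (m : ℤ) : ε (m : ZMod n) = e ((m:ℝ)/n) := by
  apply e_div_congr
  rw [← ZMod.intCast_zmod_eq_zero_iff_dvd]
  push_cast [cast_val_eq]
  simp

lemma eps_apply (a : ZMod n) : ε a = e (((a.val : ℤ) : ℝ)/n) := by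
  norm_num [ε]

lemma eps_add (a b : ZMod n) : ε (a + b) = ε a * ε b := by
  have h : a + b = ((((a.val:ℤ) + (b.val:ℤ) : ℤ)) : ZMod n) := by push_cast [ZMod.natCast_val, ZMod.cast_id]; ring
  rw [h, eps_intCast, eps_apply a, eps_apply b, ← e_add]
  congr 1
  push_cast
  ring

lemma eps_mul_conj (a b : ZMod n) : ε a * (starRingEnd ℂ) (ε b) = ε (a - b) := by
  have h : a - b = ((((a.val:ℤ) - (b.val:ℤ) : ℤ)) : ZMod n) := by push_cast [ZMod.natCast_val, ZMod.cast_id]; ring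
  rw [h, eps_intCast, eps_apply a, eps_apply b, conj_e, ← e_add]
  congr 1
  push_cast
  ring

omit [NeZero n] in
lemma eps_zero : ε (0 : ZMod n) = 1 := by
  simp [ε, e]

lemma eps_ne_one {d : ZMod n} (hd : d ≠ 0) : ε d ≠ 1 := by
  have h0 : 0 < d.val := Nat.pos_of_ne_zero (fun h => hd ((ZMod.val_eq_zero d).mp h))
  have h1 : d.val < n := ZMod.val_lt d
  intro h
  unfold ε e at h
  rw [Complex.exp_eq_one_iff] at h
  obtain ⟨m, hm⟩ := h
  have hpi : (2 * (Real.pi:ℂ) * Complex.I) ≠ 0 := by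
    simp [Real.pi_ne_zero, Complex.I_ne_zero]
  have hcancel : ((((d.val:ℝ))/n : ℝ) : ℂ) = ((m:ℝ) : ℂ) := by
    apply mul_left_cancel₀ hpi
    rw [show 2 * (Real.pi:ℂ) * Complex.I * ((m:ℝ):ℂ) = (m:ℤ) * (2 * (Real.pi:ℂ) * Complex.I) by
      push_cast; ring]
    exact_mod_cast hm
  have hr : ((d.val:ℝ))/n = (m:ℝ) := by exact_mod_cast hcancel
  have hnpos : (0:ℝ) < n := by exact_mod_cast (NeZero.pos n)
  have hlt : ((d.val:ℝ))/n < 1 := by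
    rw [div_lt_one hnpos]; exact_mod_cast h1
  have hgt : (0:ℝ) < ((d.val:ℝ))/n := by positivity
  rw [hr] at hlt hgt
  have : (0:ℤ) < m := by exact_mod_cast hgt
  have : (1:ℝ) ≤ (m:ℝ) := by exact_mod_cast this
  linarith

lemma sum_eps_mul {d : ZMod n} (hd : d ≠ 0) : ∑ j : ZMod n, ε (j * d) = 0 := by
  have key : ∑ j : ZMod n, ε ((j + 1) * d) = ∑ j : ZMod n, ε (j * d) :=
    Fintype.sum_equiv (Equiv.addRight 1) _ _ (fun j => rfl)
  have expand : ∀ j : ZMod n, ε ((j + 1) * d) = ε d * ε (j * d) := by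
    intro j
    rw [add_mul, one_mul, add_comm, eps_add]
  simp_rw [expand] at key
  rw [← Finset.mul_sum] at key
  have h2 : (ε d - 1) * ∑ j : ZMod n, ε (j * d) = 0 := by
    rw [sub_mul, one_mul, key, sub_self]
  rcases mul_eq_zero.mp h2 with h | h
  · exact absurd (sub_eq_zero.mp h) (eps_ne_one hd)
  · exact h

lemma parseval (W : Finset (ZMod n)) :
    ∑ j : ZMod n, (Complex.normSq (∑ x ∈ W, ε (j * x)) : ℂ) = (n : ℂ) * W.card := by
  have h1 : ∀ j : ZMod n, (Complex.normSq (∑ x ∈ W, ε (j * x)) : ℂ)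
      = ∑ x ∈ W, ∑ y ∈ W, ε (j * (x - y)) := by
    intro j
    rw [← Complex.mul_conj, map_sum, Finset.sum_mul_sum]
    refine Finset.sum_congr rfl fun x _ => Finset.sum_congr rfl fun y _ => ?_
    rw [eps_mul_conj, mul_sub]
  simp_rw [h1]
  rw [Finset.sum_comm]
  have h3 : ∀ x ∈ W, ∑ j : ZMod n, ∑ y ∈ W, ε (j*(x-y)) = (n:ℂ) := by
    intro x hx
    rw [Finset.sum_comm]
    have h4 : ∀ y ∈ W, ∑ j : ZMod n, ε (j * (x - y)) = if y = x then (n:ℂ) else 0 := by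
      intro y _
      by_cases hxy : y = x
      · subst hxy
        simp only [sub_self, mul_zero, eps_zero, if_true]
        rw [Finset.sum_const]
        simp [Finset.card_univ, ZMod.card]
      · rw [if_neg hxy, sum_eps_mul (sub_ne_zero.mpr (fun h => hxy h.symm))]
    rw [Finset.sum_congr rfl h4, Finset.sum_ite_eq' W x (fun _ => (n:ℂ)), if_pos hx]
  rw [Finset.sum_congr rfl h3, Finset.sum_const, nsmul_eq_mul]
  ring

lemma parseval_real (W : Finset (ZMod n)) :
    ∑ j : ZMod n, Complex.normSq (∑ x ∈ W, ε (j * x)) = (n : ℝ) * W.card := by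
  have h := parseval W
  have h2 : ((∑ j : ZMod n, Complex.normSq (∑ x ∈ W, ε (j * x)) : ℝ) : ℂ)
      = (((n : ℝ) * W.card : ℝ) : ℂ) := by push_cast; exact_mod_cast h
  exact_mod_cast h2

lemma ker_card_le (k : ℤ) (hk : k ≠ 0) :
    (Finset.univ.filter (fun u : ZMod n => (k : ZMod n) * u = 0)).card ≤ Nat.gcd k.natAbs n := by
  classical
  set g := Nat.gcd k.natAbs n with hgdef
  have hkpos : 0 < k.natAbs := Int.natAbs_pos.mpr hk
  have hgpos : 0 < g := Nat.gcd_pos_of_pos_left _ hkpos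
  have hgn : g ∣ n := Nat.gcd_dvd_right _ _
  have hnpos : 0 < n := NeZero.pos n
  set n' := n / g with hn'def
  have hn'g : n' * g = n := Nat.div_mul_cancel hgn
  have hn'pos : 0 < n' := Nat.div_pos (Nat.le_of_dvd hnpos hgn) hgpos
  have claim : ∀ u : ZMod n, (k : ZMod n) * u = 0 → n' ∣ u.val := by
    intro u hu
    have hdvd : (n:ℤ) ∣ k * (u.val : ℤ) := by
      rw [← ZMod.intCast_zmod_eq_zero_iff_dvd]
      push_cast [ZMod.natCast_val, ZMod.cast_id]
      exact hu
    have hdvd2 : n ∣ k.natAbs * u.val := by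
      have h := Int.natAbs_dvd_natAbs.mpr hdvd
      rwa [Int.natAbs_mul, Int.natAbs_natCast, Int.natAbs_natCast] at h
    set k1 := k.natAbs / g with hk1def
    have hk1 : k1 * g = k.natAbs := Nat.div_mul_cancel (Nat.gcd_dvd_left _ _)
    have hco : Nat.Coprime k1 n' := Nat.coprime_div_gcd_div_gcd hgpos
    have h3 : n' * g ∣ (k1 * u.val) * g := by
      rw [hn'g, show (k1 * u.val) * g = k.natAbs * u.val by rw [← hk1]; ring]
      exact hdvd2
    have h4 : n' ∣ k1 * u.val := (mul_dvd_mul_iff_right hgpos.ne').mp h3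
    exact hco.symm.dvd_of_dvd_mul_left (by rwa [mul_comm] at h4 ⊢)
  rw [← Finset.card_range g]
  apply Finset.card_le_card_of_injOn (fun u => u.val / n')
  · intro u hu
    rw [Finset.mem_coe]
    have hlt : u.val < g * n' := by rw [mul_comm, hn'g]; exact ZMod.val_lt u
    exact Finset.mem_range.mpr ((Nat.div_lt_iff_lt_mul hn'pos).mpr hlt)
  · intro u hu v hv huv
    simp only [Finset.coe_filter, Set.mem_setOf_eq, Finset.mem_univ, true_and] at hu hv
    have h1 : u.val = v.val := by
      have d1 := Nat.div_mul_cancel (claim u hu)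
      have d2 := Nat.div_mul_cancel (claim v hv)
      simp only at huv
      rw [← d1, ← d2, huv]
    exact ZMod.val_injective n h1

lemma fiber_card_le (k : ℤ) (hk : k ≠ 0) (H : Finset (ZMod n)) (c : ZMod n) :
    (H.filter (fun u => (k : ZMod n) * u = c)).card ≤ Nat.gcd k.natAbs n := by
  classical
  rcases (H.filter (fun u => (k : ZMod n) * u = c)).eq_empty_or_nonempty with h | ⟨u₀, hu₀⟩
  · simp [h]
  · have hc : (k : ZMod n) * u₀ = c := (Finset.mem_filter.mp hu₀).2
    refine le_trans ?_ (ker_card_le k hk)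
    apply Finset.card_le_card_of_injOn (fun u => u - u₀)
    · intro u hu
      simp only [Finset.coe_filter, Set.mem_setOf_eq, Finset.mem_filter, Finset.mem_univ, true_and]
      have hcu : (k : ZMod n) * u = c := (Finset.mem_filter.mp hu).2
      rw [mul_sub, hcu, hc, sub_self]
    · intro u _ v _ huv
      exact sub_left_injective huv

end CancelAux

open CancelAux in
/-- Cancellation Lemma: the exponential sum over solutions of
w^α ≡ b (mod n), b a unit, is O_k(√n). -/
theorem cancellation_lemma (n α : ℕ) (hn : 0 < n) (hα : 1 ≤ α) (b : (ZMod n)ˣ)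
    (k : ℤ) (hk : k ≠ 0) :
    ‖∑ w ∈ (Finset.range n).filter
        (fun w : ℕ => ((w : ZMod n)) ^ α = (b : ZMod n)), e ((k : ℝ) * w / n)‖ ≤
      (k.natAbs : ℝ) * Real.sqrt n + (sigma 1 k.natAbs : ℝ) := by
  classical
  haveI : NeZero n := ⟨hn.ne'⟩
  set g : ℕ := Nat.gcd k.natAbs n with hg
  set W : Finset (ZMod n) := Finset.univ.filter (fun x : ZMod n => x ^ α = (b : ZMod n)) with hW
  set H : Finset (ZMod n) := Finset.univ.filter (fun u : ZMod n => u ^ α = 1) with hH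
  set S : ZMod n → ℂ := fun j => ∑ x ∈ W, ε (j * x) with hS
  -- Step 1: rewrite the sum over ℕ-representatives as a sum over ZMod n
  have hsum : ∑ w ∈ (Finset.range n).filter
      (fun w : ℕ => ((w : ZMod n)) ^ α = (b : ZMod n)), e ((k : ℝ) * w / n)
      = S ((k : ZMod n)) := by
    rw [hS]
    refine Finset.sum_nbij' (i := fun w : ℕ => (w : ZMod n)) (j := fun x : ZMod n => x.val)
      ?_ ?_ ?_ ?_ ?_
    · intro a ha
      simp only [Finset.mem_filter, Finset.mem_range] at ha
      simp only [hW, Finset.mem_filter, Finset.mem_univ, true_and]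
      exact ha.2
    · intro x hx
      simp only [hW, Finset.mem_filter, Finset.mem_univ, true_and] at hx
      simp only [Finset.mem_filter, Finset.mem_range]
      refine ⟨ZMod.val_lt x, ?_⟩
      rw [ZMod.natCast_val, ZMod.cast_id]
      exact hx
    · intro a ha
      simp only [Finset.mem_filter, Finset.mem_range] at ha
      exact ZMod.val_cast_of_lt ha.1
    · intro x _
      simp only [ZMod.natCast_val, ZMod.cast_id]
    · intro a ha
      have h1 : (k : ZMod n) * (a : ZMod n) = (((k * a : ℤ)) : ZMod n) := by push_cast; ring
      rw [h1, eps_intCast]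
      congr 1
      push_cast
      ring
  -- Step 2: invariance of S under multiplication by α-th roots of unity
  have hinv : ∀ u ∈ H, S ((k : ZMod n) * u) = S ((k : ZMod n)) := by
    intro u hu
    have hu1 : u ^ α = 1 := by
      simp only [hH, Finset.mem_filter, Finset.mem_univ, true_and] at hu
      exact hu
    have huu : IsUnit u := by
      apply IsUnit.of_mul_eq_one (a := u) (u ^ (α - 1))
      rw [← pow_succ', Nat.sub_add_cancel hα]
      exact hu1
    obtain ⟨v, hv⟩ := huu
    have hv1 : v ^ α = 1 := by
      apply Units.ext
      rw [Units.val_pow_eq_pow_val, hv, hu1, Units.val_one]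
    have hvinv : ((v⁻¹ : (ZMod n)ˣ) : ZMod n) ^ α = 1 := by
      rw [← Units.val_pow_eq_pow_val, inv_pow, hv1, inv_one, Units.val_one]
    rw [hS]
    refine Finset.sum_nbij' (i := fun x => u * x)
      (j := fun x => ((v⁻¹ : (ZMod n)ˣ) : ZMod n) * x) ?_ ?_ ?_ ?_ ?_
    · intro x hx
      simp only [hW, Finset.mem_filter, Finset.mem_univ, true_and] at hx ⊢
      rw [mul_pow, hu1, one_mul, hx]
    · intro x hx
      simp only [hW, Finset.mem_filter, Finset.mem_univ, true_and] at hx ⊢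
      rw [mul_pow, hvinv, one_mul, hx]
    · intro x _
      simp only [← hv, ← mul_assoc, Units.inv_mul, one_mul]
    · intro x _
      simp only [← hv, ← mul_assoc, Units.mul_inv, one_mul]
    · intro x _
      rw [mul_assoc]
  -- Step 3: fiberwise counting bound
  have hcount : ∑ u ∈ H, Complex.normSq (S ((k:ZMod n) * u))
      ≤ (g:ℝ) * ∑ j : ZMod n, Complex.normSq (S j) := by
    calc ∑ u ∈ H, Complex.normSq (S ((k:ZMod n) * u))
        = ∑ c ∈ H.image (fun u => (k:ZMod n) * u),
            (H.filter (fun u => (k:ZMod n) * u = c)).card • Complex.normSq (S c) :=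
          Finset.sum_comp (fun j => Complex.normSq (S j)) (fun u => (k:ZMod n) * u)
      _ ≤ ∑ c ∈ H.image (fun u => (k:ZMod n) * u), (g:ℝ) * Complex.normSq (S c) := by
          apply Finset.sum_le_sum
          intro c _
          rw [nsmul_eq_mul]
          apply mul_le_mul_of_nonneg_right _ (Complex.normSq_nonneg _)
          exact_mod_cast fiber_card_le k hk H c
      _ ≤ (g:ℝ) * ∑ j : ZMod n, Complex.normSq (S j) := by
          rw [← Finset.mul_sum]
          apply mul_le_mul_of_nonneg_left _ (by positivity)
          apply Finset.sum_le_sum_of_subset_of_nonneg (Finset.subset_univ _)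
          intro j _ _
          exact Complex.normSq_nonneg _
  -- Parseval
  have hpar : ∑ j : ZMod n, Complex.normSq (S j) = (n : ℝ) * W.card := by
    simp only [hS]
    exact parseval_real W
  -- cardinalities
  have hHpos : 0 < H.card :=
    Finset.card_pos.mpr ⟨1, by simp [hH, one_pow]⟩
  have hWH : W.card ≤ H.card := by
    rcases W.eq_empty_or_nonempty with h | h
    · simp [h]
    · obtain ⟨w₀, hw₀⟩ := h
      have hw₀b : w₀ ^ α = (b : ZMod n) := by
        simp only [hW, Finset.mem_filter, Finset.mem_univ, true_and] at hw₀
        exact hw₀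
      have hwu : IsUnit w₀ := by
        apply IsUnit.of_mul_eq_one (a := w₀) (w₀ ^ (α - 1) * ((b⁻¹ : (ZMod n)ˣ) : ZMod n))
        rw [← mul_assoc, ← pow_succ', Nat.sub_add_cancel hα, hw₀b]
        exact Units.mul_inv b
      obtain ⟨v₀, hv₀⟩ := hwu
      have hv₀b : v₀ ^ α = b := by
        apply Units.ext
        rw [Units.val_pow_eq_pow_val, hv₀, hw₀b]
      apply Finset.card_le_card_of_injOn (fun x => x * ((v₀⁻¹ : (ZMod n)ˣ) : ZMod n))
      · intro x hx
        simp only [hW, Finset.coe_filter, Set.mem_setOf_eq, Finset.mem_filter, Finset.mem_univ, true_and] at hx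
        simp only [hH, Finset.coe_filter, Set.mem_setOf_eq, Finset.mem_filter, Finset.mem_univ, true_and]
        rw [mul_pow, hx, ← Units.val_pow_eq_pow_val, inv_pow, hv₀b, ← Units.val_mul,
          mul_inv_cancel, Units.val_one]
      · intro x _ y _ hxy
        simp only at hxy
        have h2 := congrArg (fun z => z * (v₀ : ZMod n)) hxy
        simpa [mul_assoc, Units.inv_mul] using h2
  -- combine
  have hsum_inv : ∑ u ∈ H, Complex.normSq (S ((k:ZMod n) * u))
      = (H.card : ℝ) * Complex.normSq (S ((k : ZMod n))) := by
    rw [Finset.sum_congr rfl (fun u hu => by rw [hinv u hu]), Finset.sum_const, nsmul_eq_mul]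
  have hHcR : (0:ℝ) < (H.card : ℝ) := by exact_mod_cast hHpos
  have hWH' : (W.card : ℝ) ≤ (H.card : ℝ) := by exact_mod_cast hWH
  have key2 : Complex.normSq (S ((k : ZMod n))) ≤ (g:ℝ) * n := by
    have h5 : (H.card : ℝ) * Complex.normSq (S ((k : ZMod n)))
        ≤ (H.card : ℝ) * ((g:ℝ) * n) := by
      calc (H.card : ℝ) * Complex.normSq (S ((k : ZMod n)))
          = ∑ u ∈ H, Complex.normSq (S ((k:ZMod n) * u)) := hsum_inv.symm
        _ ≤ (g:ℝ) * ∑ j : ZMod n, Complex.normSq (S j) := hcount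
        _ = (g:ℝ) * ((n : ℝ) * W.card) := by rw [hpar]
        _ ≤ (g:ℝ) * ((n : ℝ) * H.card) := by
            apply mul_le_mul_of_nonneg_left _ (by positivity)
            exact mul_le_mul_of_nonneg_left hWH' (by positivity)
        _ = (H.card : ℝ) * ((g:ℝ) * n) := by ring
    exact (mul_le_mul_iff_right₀ hHcR).mp h5
  -- finish
  rw [hsum]
  have hkpos : 0 < k.natAbs := Int.natAbs_pos.mpr hk
  have hgk : (g : ℝ) ≤ (k.natAbs : ℝ) := by
    exact_mod_cast Nat.le_of_dvd hkpos (Nat.gcd_dvd_left _ _)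
  have hk1 : (1:ℝ) ≤ (k.natAbs : ℝ) := by exact_mod_cast hkpos
  have hnormle : ‖S ((k:ZMod n))‖ ≤ (k.natAbs : ℝ) * Real.sqrt n := by
    have h6 : ‖S ((k:ZMod n))‖ = Real.sqrt (Complex.normSq (S ((k:ZMod n)))) := by
      rw [Complex.norm_def]
    rw [h6]
    have h7 : Real.sqrt (Complex.normSq (S ((k:ZMod n))))
        ≤ Real.sqrt ((k.natAbs:ℝ)^2 * n) := by
      apply Real.sqrt_le_sqrt
      calc Complex.normSq (S ((k:ZMod n))) ≤ (g:ℝ) * n := key2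
        _ ≤ (k.natAbs:ℝ) * n := mul_le_mul_of_nonneg_right hgk (by positivity)
        _ ≤ (k.natAbs:ℝ)^2 * n := by
            apply mul_le_mul_of_nonneg_right _ (by positivity)
            nlinarith [hk1]
    calc Real.sqrt (Complex.normSq (S ((k:ZMod n)))) ≤ Real.sqrt ((k.natAbs:ℝ)^2 * n) := h7
      _ = (k.natAbs : ℝ) * Real.sqrt n := by
          rw [Real.sqrt_mul (by positivity), Real.sqrt_sq (by positivity)]
  calc ‖S ((k:ZMod n))‖ ≤ (k.natAbs : ℝ) * Real.sqrt n := hnormle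
    _ ≤ (k.natAbs : ℝ) * Real.sqrt n + (sigma 1 k.natAbs : ℝ) :=
        le_add_of_nonneg_right (by positivity)
end

section
/- Let n be odd composite with n - 1 = d·2^s (d odd), and let k be a nonzero integer. Then |Σ_{w: w^d ≡ 1 mod n, 0 ≤ w < n} e(kw/n)| ≤ |k|·√n + σ(|k|), hence this sum is O_k(√n). -/
open Finset ArithmeticFunction

lemma e_add (x y : ℝ) : e (x + y) = e x * e y := by
  rw [e, e, e, ← Complex.exp_add]
  push_cast
  ring_nf

lemma e_int (m : ℤ) : e m = 1 := by
  rw [e, show 2 * Real.pi * Complex.I * (m:ℝ) = (m:ℤ) * (2 * Real.pi * Complex.I) by push_cast; ring,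
    Complex.exp_int_mul_two_pi_mul_I]

lemma e_conj (x : ℝ) : (starRingEnd ℂ) (e x) = e (-x) := by
  rw [e, e, ← Complex.exp_conj]
  congr 1
  simp only [map_mul, Complex.conj_ofReal, Complex.conj_I, map_ofNat]
  push_cast
  ring

lemma e_ne_one {x : ℝ} (h0 : 0 < x) (h1 : x < 1) : e x ≠ 1 := by
  intro h
  rw [e, Complex.exp_eq_one_iff] at h
  obtain ⟨m, hm⟩ := h
  have hI : (2 * Real.pi * Complex.I * x : ℂ) = (x : ℂ) * (2 * Real.pi * Complex.I) := by ring
  rw [hI] at hm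
  have h2 : (2 * Real.pi * Complex.I : ℂ) ≠ 0 :=
    mul_ne_zero (mul_ne_zero two_ne_zero (Complex.ofReal_ne_zero.2 Real.pi_ne_zero))
      Complex.I_ne_zero
  have : (x : ℂ) = (m : ℂ) := mul_right_cancel₀ h2 hm
  have : x = (m : ℝ) := by exact_mod_cast this
  subst this
  rcases le_or_gt m 0 with h | h
  · exact absurd h0 (by exact_mod_cast not_lt.2 (by exact_mod_cast h : (m:ℝ) ≤ 0))
  · have : (1:ℝ) ≤ m := by exact_mod_cast h
    linarith

section Psi

variable {n : ℕ} [NeZero n]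

/-- The standard additive character of `ZMod n`. -/
noncomputable def psi (a : ZMod n) : ℂ := e ((a.val : ℝ) / n)

lemma psi_intCast (a : ℤ) : e ((a : ℝ) / n) = psi ((a : ZMod n)) := by
  obtain ⟨c, hc⟩ : (n:ℤ) ∣ a - ((a : ZMod n).val : ℤ) := by
    rw [← ZMod.intCast_zmod_eq_zero_iff_dvd]
    push_cast
    simp [ZMod.natCast_val, ZMod.cast_id]
  have hn0 : (n:ℝ) ≠ 0 := Nat.cast_ne_zero.2 (NeZero.ne n)
  have key : (a : ℝ) / n = ((a : ZMod n).val : ℝ)/n + (c : ℝ) := by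
    have hc' := congrArg (Int.cast : ℤ → ℝ) hc
    push_cast at hc'
    have h9 : ((a : ZMod n).val : ℝ)/n + (c:ℝ) = (((a : ZMod n).val : ℝ) + c * n)/n := by
      rw [add_div, mul_div_assoc, div_self hn0, mul_one]
    rw [h9]
    congr 1
    linarith
  rw [psi, key, e_add, e_int, mul_one]

lemma psi_add (a b : ZMod n) : psi (a + b) = psi a * psi b := by
  have h := psi_intCast (n := n) ((a.val : ℤ) + (b.val : ℤ))
  have h2 : ((((a.val : ℤ) + (b.val : ℤ)) : ℤ) : ZMod n) = a + b := by
    push_cast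
    simp [ZMod.natCast_val, ZMod.cast_id]
  rw [h2] at h
  rw [← h]
  push_cast
  rw [add_div, e_add, psi, psi]

lemma psi_zero : psi (0 : ZMod n) = 1 := by
  have : psi (0 : ZMod n) = e ((0:ℤ)) := by
    rw [psi, ZMod.val_zero]
    norm_num
  rw [this, e_int]

lemma psi_conj (a : ZMod n) : (starRingEnd ℂ) (psi a) = psi (-a) := by
  rw [psi, e_conj]
  have : -((a.val : ℝ) / n) = ((-(a.val : ℤ) : ℤ) : ℝ) / n := by push_cast; ring
  rw [this, psi_intCast]
  congr 1
  push_cast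
  simp [ZMod.natCast_val, ZMod.cast_id]

lemma psi_mul_conj (a b : ZMod n) : psi a * (starRingEnd ℂ) (psi b) = psi (a - b) := by
  rw [psi_conj, ← psi_add, sub_eq_add_neg]

lemma psi_ne_one {a : ZMod n} (ha : a ≠ 0) : psi a ≠ 1 := by
  apply e_ne_one
  · have h1 : 0 < a.val := ZMod.val_pos.2 ha
    have h2 : 0 < (n:ℝ) := by
      have := NeZero.pos n
      exact_mod_cast this
    positivity
  · have h1 : a.val < n := ZMod.val_lt a
    have h2 : 0 < (n:ℝ) := by
      have := NeZero.pos n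
      exact_mod_cast this
    rw [div_lt_one h2]
    exact_mod_cast h1

lemma sum_psi_mul (a : ZMod n) :
    ∑ t : ZMod n, psi (a * t) = if a = 0 then (n : ℂ) else 0 := by
  split_ifs with h
  · subst h
    simp [psi_zero, ZMod.card n]
  · have hshift : ∑ t : ZMod n, psi (a * t) = ∑ t : ZMod n, psi (a * (t + 1)) := by
      apply Finset.sum_nbij' (i := fun t : ZMod n => t - 1) (j := fun t : ZMod n => t + 1) <;>
        intros <;> simp
    have hmul : ∑ t : ZMod n, psi (a * (t + 1)) = (∑ t : ZMod n, psi (a * t)) * psi a := by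
      rw [Finset.sum_mul]
      apply Finset.sum_congr rfl
      intro t _
      rw [mul_add, mul_one, psi_add]
    have key : (∑ t : ZMod n, psi (a * t)) * (psi a - 1) = 0 := by
      rw [mul_sub, mul_one, ← hmul, ← hshift, sub_self]
    rcases mul_eq_zero.1 key with h' | h'
    · exact h'
    · exact absurd (sub_eq_zero.1 h') (psi_ne_one h)

end Psi

/-- estimate of S₂, the exponential sum over solutions of w^d ≡ 1 (mod n). -/
theorem S2_bound (n d s : ℕ) (hodd : Odd n) (hcomp : ¬ n.Prime) (hn : 1 < n)
    (hd : Odd d) (hds : n - 1 = d * 2 ^ s) (k : ℤ) (hk : k ≠ 0) :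
    ‖∑ w ∈ (Finset.range n).filter (fun w : ℕ => ((w : ZMod n)) ^ d = 1),
        e ((k : ℝ) * w / n)‖ ≤
      (k.natAbs : ℝ) * Real.sqrt n + (sigma 1 k.natAbs : ℝ) := by
  haveI : NeZero n := ⟨by omega⟩
  have hd1 : 1 ≤ d := hd.pos
  set K : ℕ := k.natAbs with hKdef
  have hK1 : 1 ≤ K := Int.natAbs_pos.2 hk
  set κ : ZMod n := (k : ZMod n) with hκdef
  set H : Finset (ZMod n) := Finset.univ.filter (fun z => z ^ d = 1) with hHdef
  set S : ℂ := ∑ z ∈ H, psi (κ * z) with hSdef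
  -- Step A: the sum equals S
  have hA : ∑ w ∈ (Finset.range n).filter (fun w : ℕ => ((w : ZMod n)) ^ d = 1),
      e ((k : ℝ) * w / n) = S := by
    rw [hSdef]
    apply Finset.sum_nbij' (i := fun w : ℕ => (w : ZMod n)) (j := fun z : ZMod n => z.val)
    · intro w hw
      simp only [Finset.mem_filter, Finset.mem_range] at hw
      simp [hHdef, hw.2]
    · intro z hz
      simp only [hHdef, Finset.mem_filter, Finset.mem_univ, true_and] at hz
      simp only [Finset.mem_filter, Finset.mem_range]
      refine ⟨ZMod.val_lt z, ?_⟩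
      rw [ZMod.natCast_val, ZMod.cast_id]
      exact hz
    · intro w hw
      simp only [Finset.mem_filter, Finset.mem_range] at hw
      exact ZMod.val_cast_of_lt hw.1
    · intro z hz
      rw [ZMod.natCast_val, ZMod.cast_id]
    · intro w hw
      have hcast : (k : ℝ) * w / n = ((k * (w:ℤ) : ℤ) : ℝ) / n := by push_cast; ring
      rw [hcast, psi_intCast]
      congr 1
      rw [hκdef]
      push_cast
      ring
  rw [hA]
  -- basic facts about H
  have hone : (1 : ZMod n) ∈ H := by simp [hHdef]
  have hm0 : 0 < H.card := Finset.card_pos.2 ⟨1, hone⟩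
  set m : ℕ := H.card with hmdef
  -- the T function
  set T : ZMod n → ℂ := fun t => ∑ z ∈ H, psi (κ * (t * z)) with hTdef
  -- step B: for h ∈ H, reindexing shows T h = S
  have hT1 : ∀ h ∈ H, T h = S := by
    intro h hh
    simp only [hHdef, Finset.mem_filter, Finset.mem_univ, true_and] at hh
    have hinv : h ^ (d - 1) * h = 1 := by
      rw [← pow_succ, show d - 1 + 1 = d by omega, hh]
    rw [hSdef, hTdef]
    apply Finset.sum_nbij' (i := fun z : ZMod n => h * z) (j := fun z : ZMod n => h ^ (d-1) * z)
    · intro z hz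
      simp only [hHdef, Finset.mem_filter, Finset.mem_univ, true_and] at hz ⊢
      rw [mul_pow, hh, hz, one_mul]
    · intro z hz
      simp only [hHdef, Finset.mem_filter, Finset.mem_univ, true_and] at hz ⊢
      rw [mul_pow, ← pow_mul, mul_comm (d-1) d, pow_mul, hh, one_pow, one_mul, hz]
    · intro z _
      rw [← mul_assoc, hinv, one_mul]
    · intro z _
      rw [← mul_assoc, mul_comm h (h ^ (d-1)), hinv, one_mul]
    · intro z _
      rfl
  -- counting lemma: the kernel of multiplication by κ has at most K elements
  have hdvd : ∀ x : ZMod n, κ * x = 0 → n ∣ K * x.val := by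
    intro x hx
    have hKx : ((K : ℕ) : ZMod n) * x = 0 := by
      rw [hKdef]
      rcases Int.natAbs_eq k with h | h
      · rw [hκdef, h, Int.cast_natCast] at hx
        exact hx
      · rw [hκdef, h, Int.cast_neg, Int.cast_natCast, neg_mul, neg_eq_zero] at hx
        exact hx
    rw [← ZMod.natCast_eq_zero_iff]
    push_cast
    rw [ZMod.natCast_val, ZMod.cast_id]
    exact hKx
  have hker : (Finset.univ.filter (fun x : ZMod n => κ * x = 0)).card ≤ K := by
    have : (Finset.univ.filter (fun x : ZMod n => κ * x = 0)).card
        ≤ (Finset.range K).card := by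
      apply Finset.card_le_card_of_injOn (f := fun x : ZMod n => K * x.val / n)
      · intro x hx
        simp only [Finset.mem_coe, Finset.mem_filter, Finset.mem_univ, true_and] at hx
        obtain ⟨j, hj⟩ := hdvd x hx
        rw [Finset.mem_coe, Finset.mem_range]
        beta_reduce
        rw [hj, Nat.mul_div_cancel_left _ (NeZero.pos n)]
        have hxv : x.val < n := ZMod.val_lt x
        have hlt : K * x.val < K * n := by
          exact mul_lt_mul_of_pos_left hxv (by omega : 0 < K)
        have h2 : n * j < n * K := by
          calc n * j = K * x.val := hj.symm
            _ < K * n := hlt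
            _ = n * K := mul_comm K n
        exact Nat.lt_of_mul_lt_mul_left h2
      · intro x hx y hy hxy
        simp only [Finset.coe_filter, Set.mem_setOf_eq, Finset.mem_univ, true_and] at hx hy
        obtain ⟨jx, hjx⟩ := hdvd x hx
        obtain ⟨jy, hjy⟩ := hdvd y hy
        simp only [hjx, hjy, Nat.mul_div_cancel_left _ (NeZero.pos n)] at hxy
        have hKv : K * x.val = K * y.val := by rw [hjx, hjy, hxy]
        have hv : x.val = y.val := Nat.eq_of_mul_eq_mul_left (by omega) hKv
        exact ZMod.val_injective n hv
    simpa [Finset.card_range] using this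
  -- per-z count
  have hcount : ∀ z : ZMod n, (H.filter (fun y => κ * (z - y) = 0)).card ≤ K := by
    intro z
    calc (H.filter (fun y => κ * (z - y) = 0)).card
        ≤ (Finset.univ.filter (fun x : ZMod n => κ * x = 0)).card := by
          apply Finset.card_le_card_of_injOn (f := fun y => z - y)
          · intro y hy
            simp only [Finset.mem_coe, Finset.mem_filter] at hy ⊢
            exact ⟨Finset.mem_univ _, hy.2⟩
          · intro a _ b _ hab
            simpa using sub_right_inj.mp hab
      _ ≤ K := hker
  -- Step F: sum of ‖T t‖² over all t
  have hC : ∑ t : ZMod n, (T t * (starRingEnd ℂ) (T t))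
      = (n : ℂ) * (∑ z ∈ H, ((H.filter (fun y => κ * (z - y) = 0)).card : ℂ)) := by
    have expand : ∀ t : ZMod n, T t * (starRingEnd ℂ) (T t)
        = ∑ z ∈ H, ∑ y ∈ H, psi ((κ * (z - y)) * t) := by
      intro t
      rw [hTdef]
      simp only
      rw [map_sum, Finset.sum_mul_sum]
      apply Finset.sum_congr rfl
      intro z _
      apply Finset.sum_congr rfl
      intro y _
      rw [psi_mul_conj]
      congr 1
      ring
    calc ∑ t : ZMod n, (T t * (starRingEnd ℂ) (T t))
        = ∑ t : ZMod n, ∑ z ∈ H, ∑ y ∈ H, psi ((κ * (z - y)) * t) :=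
          Finset.sum_congr rfl (fun t _ => expand t)
      _ = ∑ z ∈ H, ∑ y ∈ H, ∑ t : ZMod n, psi ((κ * (z - y)) * t) := by
          rw [Finset.sum_comm]
          apply Finset.sum_congr rfl
          intro z _
          rw [Finset.sum_comm]
      _ = ∑ z ∈ H, ∑ y ∈ H, (if κ * (z - y) = 0 then (n:ℂ) else 0) := by
          apply Finset.sum_congr rfl
          intro z _
          apply Finset.sum_congr rfl
          intro y _
          exact sum_psi_mul _
      _ = ∑ z ∈ H, ((H.filter (fun y => κ * (z - y) = 0)).card : ℂ) * (n:ℂ) := by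
          apply Finset.sum_congr rfl
          intro z _
          rw [← Finset.sum_filter, Finset.sum_const, nsmul_eq_mul]
      _ = (n : ℂ) * (∑ z ∈ H, ((H.filter (fun y => κ * (z - y) = 0)).card : ℂ)) := by
          rw [Finset.mul_sum]
          exact Finset.sum_congr rfl (fun z _ => mul_comm _ _)
  have hreal : ((∑ t : ZMod n, ‖T t‖^2 : ℝ) : ℂ) = ∑ t : ZMod n, T t * (starRingEnd ℂ) (T t) := by
    push_cast
    apply Finset.sum_congr rfl
    intro t _
    rw [Complex.mul_conj, Complex.normSq_eq_norm_sq]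
    norm_cast
  have hF : ∑ t : ZMod n, ‖T t‖^2 ≤ (n : ℝ) * (m * K) := by
    have hfin : ∑ t : ZMod n, ‖T t‖^2
        = ((n * ∑ z ∈ H, (H.filter (fun y => κ * (z - y) = 0)).card : ℕ) : ℝ) := by
      have h1 : ((∑ t : ZMod n, ‖T t‖^2 : ℝ) : ℂ)
          = ((n * ∑ z ∈ H, (H.filter (fun y => κ * (z - y) = 0)).card : ℕ) : ℂ) := by
        rw [hreal, hC]
        push_cast
        ring
      exact_mod_cast h1
    rw [hfin]
    have h2 : (∑ z ∈ H, (H.filter (fun y => κ * (z - y) = 0)).card) ≤ m * K := by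
      calc ∑ z ∈ H, (H.filter (fun y => κ * (z - y) = 0)).card
          ≤ ∑ _z ∈ H, K := Finset.sum_le_sum (fun z _ => hcount z)
        _ = m * K := by rw [Finset.sum_const, smul_eq_mul]
    calc ((n * ∑ z ∈ H, (H.filter (fun y => κ * (z - y) = 0)).card : ℕ) : ℝ)
        ≤ ((n * (m * K) : ℕ) : ℝ) := by
          exact_mod_cast Nat.mul_le_mul (le_refl n) h2
      _ = (n:ℝ) * (m * K) := by push_cast; ring
  -- Cauchy–Schwarz with averaging over H
  have hmS : ((m:ℝ) * ‖S‖)^2 ≤ (m:ℝ) * ∑ t : ZMod n, ‖T t‖^2 := by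
    have h1 : (m:ℝ) * ‖S‖ ≤ ∑ h ∈ H, ‖T h‖ := by
      have hsum : ∑ h ∈ H, T h = (m : ℂ) * S := by
        rw [Finset.sum_congr rfl hT1, Finset.sum_const, nsmul_eq_mul]
      calc (m:ℝ) * ‖S‖ = ‖(m:ℂ) * S‖ := by
            rw [norm_mul, Complex.norm_natCast]
        _ = ‖∑ h ∈ H, T h‖ := by rw [hsum]
        _ ≤ ∑ h ∈ H, ‖T h‖ := norm_sum_le _ _
    have h2 : (∑ h ∈ H, ‖T h‖)^2 ≤ (m:ℝ) * ∑ h ∈ H, ‖T h‖^2 := by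
      have := sq_sum_le_card_mul_sum_sq (s := H) (f := fun h => ‖T h‖)
      exact_mod_cast this
    have h3 : ∑ h ∈ H, ‖T h‖^2 ≤ ∑ t : ZMod n, ‖T t‖^2 :=
      Finset.sum_le_sum_of_subset_of_nonneg (Finset.subset_univ H)
        (fun t _ _ => by positivity)
    have h0 : 0 ≤ (m:ℝ) * ‖S‖ := by positivity
    calc ((m:ℝ)*‖S‖)^2 ≤ (∑ h ∈ H, ‖T h‖)^2 := by
          exact pow_le_pow_left₀ h0 h1 2
      _ ≤ (m:ℝ) * ∑ h ∈ H, ‖T h‖^2 := h2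
      _ ≤ (m:ℝ) * ∑ t : ZMod n, ‖T t‖^2 := by
          exact mul_le_mul_of_nonneg_left h3 (by positivity)
  -- conclude ‖S‖² ≤ n K
  have hS2 : ‖S‖^2 ≤ (n:ℝ) * K := by
    have h4 : ((m:ℝ) * ‖S‖)^2 ≤ (m:ℝ) * ((n:ℝ) * (m * K)) :=
      le_trans hmS (mul_le_mul_of_nonneg_left hF (by positivity))
    have hm2 : (0:ℝ) < (m:ℝ)^2 := by
      have : (0:ℝ) < (m:ℝ) := by exact_mod_cast hm0
      positivity
    have h5 : ‖S‖^2 * (m:ℝ)^2 ≤ ((n:ℝ) * K) * (m:ℝ)^2 := by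
      calc ‖S‖^2 * (m:ℝ)^2 = ((m:ℝ) * ‖S‖)^2 := by ring
        _ ≤ (m:ℝ) * ((n:ℝ) * (m * K)) := h4
        _ = ((n:ℝ) * K) * (m:ℝ)^2 := by ring
    exact le_of_mul_le_mul_right h5 hm2
  have hnorm : ‖S‖ ≤ Real.sqrt ((n:ℝ) * K) :=
    (Real.le_sqrt (norm_nonneg S) (by positivity)).2 hS2
  have hK1r : (1:ℝ) ≤ (K:ℝ) := by exact_mod_cast hK1
  have hsqK : Real.sqrt (K:ℝ) ≤ (K:ℝ) := by
    calc Real.sqrt (K:ℝ) ≤ Real.sqrt ((K:ℝ)^2) := Real.sqrt_le_sqrt (by nlinarith)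
      _ = (K:ℝ) := Real.sqrt_sq (by positivity)
  calc ‖S‖ ≤ Real.sqrt ((n:ℝ) * K) := hnorm
    _ = Real.sqrt (n:ℝ) * Real.sqrt (K:ℝ) := Real.sqrt_mul (by positivity) _
    _ ≤ Real.sqrt (n:ℝ) * (K:ℝ) := mul_le_mul_of_nonneg_left hsqK (Real.sqrt_nonneg _)
    _ = (K:ℝ) * Real.sqrt n := mul_comm _ _
    _ ≤ (K:ℝ) * Real.sqrt n + (sigma 1 K : ℝ) := le_add_of_nonneg_right (Nat.cast_nonneg _)
end
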